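/- In any ordered goods instance, let i be an agent and let k be the number of items j ∈ M with v_i(j) ≥ μ_i. Then agent i has an MMS partition in which each of the items 1, 2, …, min(n − 1, k) forms a bundle of cardinality one. -/
import Mathlib


open Finset

/-- `A` is an (ordered) partition of the item set `M` into bundles indexed by
the agent set `N`: bundles are pairwise disjoint subsets of `M` whose union is `M`. -/
def IsPartition (N M : Finset ℕ) (A : ℕ → Finset ℕ) : Prop :=
  (∀ i ∈ N, A i ⊆ M) ∧
  (∀ i ∈ N, ∀ j ∈ N, i ≠ j → Disjoint (A i) (A j)) ∧
  N.biUnion A = M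

/-- Additive value of a bundle `B` under item values `v`. -/
noncomputable def bval (v : ℕ → ℝ) (B : Finset ℕ) : ℝ := ∑ g ∈ B, v g

/-- The maximin share of an agent with item values `v`, over the instance with
agent set `N` and item set `M`: the largest, over all partitions, of the minimum
bundle value. -/
noncomputable def mms (N M : Finset ℕ) (v : ℕ → ℝ) : ℝ :=
  sSup { x | ∃ A : ℕ → Finset ℕ, IsPartition N M A ∧
    x = sInf ((fun i => bval v (A i)) '' (N : Set ℕ)) }

/-- `A` is an MMS partition for an agent with item values `v`: every bundle is
worth at least the agent's maximin share. -/
def IsMMSPartition (N M : Finset ℕ) (v : ℕ → ℝ) (A : ℕ → Finset ℕ) : Prop :=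
  IsPartition N M A ∧ ∀ j ∈ N, mms N M v ≤ bval v (A j)

/-- The instance `(N, M, v)` admits an MMS allocation: an allocation giving
every agent a bundle worth at least her maximin share. -/
def ExistsMMSAllocation (N M : Finset ℕ) (v : ℕ → ℕ → ℝ) : Prop :=
  ∃ A : ℕ → Finset ℕ, IsPartition N M A ∧
    ∀ i ∈ N, mms N M (v i) ≤ bval (v i) (A i)

/-- A goods instance: all item values are non-negative. -/
def GoodsInstance (N M : Finset ℕ) (v : ℕ → ℕ → ℝ) : Prop :=
  ∀ i ∈ N, ∀ j ∈ M, 0 ≤ v i j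

/-- A chores instance: all item values are non-positive. -/
def ChoresInstance (N M : Finset ℕ) (v : ℕ → ℕ → ℝ) : Prop :=
  ∀ i ∈ N, ∀ j ∈ M, v i j ≤ 0

/-- Ordered goods instance: lower-numbered items are (weakly) more valuable. -/
def OrderedGoods (N M : Finset ℕ) (v : ℕ → ℕ → ℝ) : Prop :=
  ∀ i ∈ N, ∀ j ∈ M, ∀ k ∈ M, j ≤ k → v i k ≤ v i j

/-- Ordered chores instance: lower-numbered items are (weakly) worse. -/
def OrderedChores (N M : Finset ℕ) (v : ℕ → ℕ → ℝ) : Prop :=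
  ∀ i ∈ N, ∀ j ∈ M, ∀ k ∈ M, j ≤ k → v i j ≤ v i k

/-- Removing agents `N'` and items `M'` is a valid reduction: `M'` can be
partitioned among the agents of `N'` so that each receives a bundle worth at
least her MMS in the original instance, and in the reduced instance every
remaining agent's MMS is at least her MMS in the original instance. -/
def ValidReduction (N M : Finset ℕ) (v : ℕ → ℕ → ℝ) (N' M' : Finset ℕ) : Prop :=
  N' ⊆ N ∧ M' ⊆ M ∧
  (∃ B : ℕ → Finset ℕ, IsPartition N' M' B ∧
    ∀ i ∈ N', mms N M (v i) ≤ bval (v i) (B i)) ∧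
  ∀ i ∈ N \ N', mms N M (v i) ≤ mms (N \ N') (M \ M') (v i)

/-- In an ordered instance, bundle `B` dominates bundle `B'`: there is an
injective map `f : B' → B` with `f j ≤ j` for all `j ∈ B'`. -/
def Dominates (B B' : Finset ℕ) : Prop :=
  ∃ f : ℕ → ℕ, Set.InjOn f (B' : Set ℕ) ∧ ∀ j ∈ B', f j ∈ B ∧ f j ≤ j

lemma exists_mms_partition (N M : Finset ℕ) (v : ℕ → ℝ) (hN : N.Nonempty) :
    ∃ A, IsMMSPartition N M v A := by
  obtain ⟨i0, hi0⟩ := hN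
  set S := { x | ∃ A : ℕ → Finset ℕ, IsPartition N M A ∧
    x = sInf ((fun i => bval v (A i)) '' (N : Set ℕ)) } with hS
  have hSne : S.Nonempty := by
    refine ⟨_, fun j => if j = i0 then M else ∅, ?_, rfl⟩
    refine ⟨fun j _ => ?_, fun a _ b _ hab => ?_, ?_⟩
    · simp only []
      split <;> simp
    · rcases eq_or_ne a i0 with rfl | ha
      · simp only [if_pos rfl, if_neg (Ne.symm hab)]
        exact disjoint_empty_right _
      · simp only [if_neg ha]
        exact disjoint_empty_left _
    · apply subset_antisymm
      · intro x hx
        simp only [mem_biUnion] at hx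
        obtain ⟨j, _, hj⟩ := hx
        set_option linter.unnecessarySeqFocus false in
        by_cases h : j = i0 <;> simp [h] at hj <;> try exact hj
      · intro x hx
        exact mem_biUnion.2 ⟨i0, hi0, by simp [hx]⟩
  have hval : ∀ A : ℕ → Finset ℕ, IsPartition N M A →
      (sInf ((fun i => bval v (A i)) '' (N : Set ℕ)) ∈
        ((fun i => bval v (A i)) '' (N : Set ℕ)) ∧
      ∀ j ∈ N, sInf ((fun i => bval v (A i)) '' (N : Set ℕ)) ≤ bval v (A j)) := by
    intro A hA
    have hfin : ((fun i => bval v (A i)) '' (N : Set ℕ)).Finite :=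
      (N.finite_toSet).image _
    have hne : ((fun i => bval v (A i)) '' (N : Set ℕ)).Nonempty :=
      ⟨_, Set.mem_image_of_mem _ (by exact_mod_cast hi0)⟩
    refine ⟨hne.csInf_mem hfin, fun j hj => csInf_le hfin.bddBelow ?_⟩
    exact Set.mem_image_of_mem _ (by exact_mod_cast hj)
  have hSfin : S.Finite := by
    apply Set.Finite.subset (Set.Finite.image (bval v) (M.powerset.finite_toSet))
    rintro x ⟨A, hA, rfl⟩
    obtain ⟨⟨j, hj, hjx⟩, -⟩ := hval A hA
    exact ⟨A j, by simpa using hA.1 j hj, hjx⟩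
  have hmem : sSup S ∈ S := hSne.csSup_mem hSfin
  obtain ⟨A, hA, hAx⟩ := hmem
  refine ⟨A, hA, fun j hj => ?_⟩
  have := (hval A hA).2 j hj
  rw [mms, ← hS, hAx]
  exact this

theorem mms_partition_layout (n m : ℕ) (v : ℕ → ℕ → ℝ)
    (hgoods : GoodsInstance (Finset.Icc 1 n) (Finset.Icc 1 m) v)
    (hord : OrderedGoods (Finset.Icc 1 n) (Finset.Icc 1 m) v)
    (i : ℕ) (hi : i ∈ Finset.Icc 1 n) (k : ℕ)
    (hk : k = ((Finset.Icc 1 m).filter (fun j =>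
      mms (Finset.Icc 1 n) (Finset.Icc 1 m) (v i) ≤ v i j)).card) :
    ∃ A : ℕ → Finset ℕ,
      IsMMSPartition (Finset.Icc 1 n) (Finset.Icc 1 m) (v i) A ∧
      ∀ g ∈ Finset.Icc 1 (min (n - 1) k), ∃ j ∈ Finset.Icc 1 n, A j = {g} := by
  set N := Finset.Icc 1 n with hN
  set M := Finset.Icc 1 m with hM
  set μ := mms N M (v i) with hμ
  have hin : i ∈ N := hi
  have hn1 : 1 ≤ n := le_trans (Finset.mem_Icc.mp hi).1 (Finset.mem_Icc.mp hi).2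
  have hkm : k ≤ m := by
    rw [hk]
    calc ((Finset.Icc 1 m).filter _).card ≤ (Finset.Icc 1 m).card :=
          Finset.card_filter_le _ _
      _ = m := by simp [Nat.card_Icc]
  have hhigh : ∀ g, 1 ≤ g → g ≤ k → μ ≤ v i g := by
    intro g hg1 hgk
    by_contra hlt
    push_neg at hlt
    have hgM : g ∈ M := Finset.mem_Icc.mpr ⟨hg1, hgk.trans hkm⟩
    have hsub : M.filter (fun j => μ ≤ v i j) ⊆ Finset.Icc 1 (g - 1) := by
      intro j hj
      rw [Finset.mem_filter] at hj
      obtain ⟨hjM, hjv⟩ := hj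
      have hj1 := (Finset.mem_Icc.mp hjM).1
      by_contra hj'
      have hgj : g ≤ j := by
        rcases Nat.lt_or_ge j g with h | h
        · exact absurd (Finset.mem_Icc.mpr ⟨hj1, Nat.le_pred_of_lt h⟩) hj'
        · exact h
      have := hord i hin g hgM j hjM hgj
      exact absurd (le_trans hjv this) (not_le.mpr hlt)
    have hcard : k ≤ g - 1 := by
      rw [hk]
      calc _ ≤ (Finset.Icc 1 (g - 1)).card := Finset.card_le_card hsub
        _ = g - 1 := by simp [Nat.card_Icc]
    omega
  obtain ⟨A0, hA0⟩ := exists_mms_partition N M (v i)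
    ⟨1, Finset.mem_Icc.mpr ⟨le_refl 1, hn1⟩⟩
  set t := min (n - 1) k with ht
  have key : ∀ s, s ≤ t → ∃ A, IsMMSPartition N M (v i) A ∧
      ∀ g ∈ Finset.Icc 1 s, ∃ j ∈ N, A j = {g} := by
    intro s
    induction s with
    | zero => exact fun _ => ⟨A0, hA0, by simp⟩
    | succ s ih =>
      intro hst
      obtain ⟨A, hA, hsing⟩ := ih (Nat.le_of_succ_le hst)
      obtain ⟨⟨hsubM, hdisj, hunion⟩, hval⟩ := hA
      have hs1k : s + 1 ≤ k := le_trans hst (min_le_right _ _)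
      have hs1n : s + 1 ≤ n - 1 := le_trans hst (min_le_left _ _)
      have hgood : μ ≤ v i (s + 1) := hhigh (s + 1) (by omega) hs1k
      have hs1M : s + 1 ∈ M := Finset.mem_Icc.mpr ⟨by omega, by omega⟩
      obtain ⟨j1, hj1N, hj1⟩ := Finset.mem_biUnion.mp (hunion ▸ hs1M)
      set W := (Finset.Icc 1 s).image
        (fun g => if hg : g ∈ Finset.Icc 1 s then (hsing g hg).choose else 0)
        with hW
      have hWsubN : W ⊆ N := by
        intro j hj
        rw [hW, Finset.mem_image] at hj
        obtain ⟨g, hg, rfl⟩ := hj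
        rw [dif_pos hg]
        exact (hsing g hg).choose_spec.1
      have hj1W : j1 ∉ W := by
        intro hmem
        rw [hW, Finset.mem_image] at hmem
        obtain ⟨g, hg, hEq⟩ := hmem
        rw [dif_pos hg] at hEq
        have hAg := (hsing g hg).choose_spec.2
        rw [hEq] at hAg
        rw [hAg, Finset.mem_singleton] at hj1
        have := (Finset.mem_Icc.mp hg).2
        omega
      have hins : insert j1 W ⊆ N := Finset.insert_subset hj1N hWsubN
      have hnon : (N \ insert j1 W).Nonempty := by
        rw [← Finset.card_pos, Finset.card_sdiff_of_subset hins]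
        have h1 : (insert j1 W).card ≤ W.card + 1 := Finset.card_insert_le _ _
        have h1b : W.card ≤ s :=
          le_trans Finset.card_image_le (by simp [Nat.card_Icc])
        have h2 : N.card = n := by simp [hN, Nat.card_Icc]
        omega
      obtain ⟨j2, hj2⟩ := hnon
      rw [Finset.mem_sdiff, Finset.mem_insert] at hj2
      push_neg at hj2
      obtain ⟨hj2N, hj21, hj2W⟩ := hj2
      have hd12 : Disjoint (A j1) (A j2) := hdisj j1 hj1N j2 hj2N (Ne.symm hj21)
      have hs1A2 : s + 1 ∉ A j2 := Finset.disjoint_left.mp hd12 hj1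
      set A' := fun j => if j = j1 then ({s + 1} : Finset ℕ)
        else if j = j2 then A j2 ∪ (A j1 \ {s + 1}) else A j with hA'
      have hA'sub : ∀ j ∈ N, A' j ⊆ M := by
        intro j hj
        simp only [hA']
        split
        · simpa using hs1M
        · split
          · exact Finset.union_subset (hsubM j2 hj2N)
              (le_trans (Finset.sdiff_subset) (hsubM j1 hj1N))
          · exact hsubM j hj
      refine ⟨A', ⟨⟨hA'sub, ?_, ?_⟩, ?_⟩, ?_⟩
      · -- disjointness
        intro a haN b hbN hab
        rw [Finset.disjoint_left]
        intro x hxa hxb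
        have hmem : ∀ c y, y ∈ A' c →
            (c = j1 ∧ y = s + 1) ∨
            (c ≠ j1 ∧ c = j2 ∧ (y ∈ A j2 ∨ (y ∈ A j1 ∧ y ≠ s + 1))) ∨
            (c ≠ j1 ∧ c ≠ j2 ∧ y ∈ A c) := by
          intro c y hy
          by_cases h1 : c = j1
          · subst h1
            simp only [hA', if_pos rfl, ite_true, Finset.mem_singleton] at hy
            exact Or.inl ⟨rfl, hy⟩
          · by_cases h2 : c = j2
            · subst h2
              simp only [hA', if_neg h1, if_pos rfl, ite_true, Finset.mem_union,
                Finset.mem_sdiff, Finset.mem_singleton] at hy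
              exact Or.inr (Or.inl ⟨h1, rfl, hy⟩)
            · simp only [hA', if_neg h1, if_neg h2] at hy
              exact Or.inr (Or.inr ⟨h1, h2, hy⟩)
        have hAA : ∀ c, c ∈ N → c ≠ j1 → x ∈ A c → x ∈ A j1 → False := by
          intro c hc hc1 h1 h2
          exact Finset.disjoint_left.mp (hdisj j1 hj1N c hc (Ne.symm hc1)) h2 h1
        have hAA2 : ∀ c, c ∈ N → c ≠ j2 → x ∈ A c → x ∈ A j2 → False := by
          intro c hc hc2 h1 h2
          exact Finset.disjoint_left.mp (hdisj j2 hj2N c hc (Ne.symm hc2)) h2 h1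
        rcases hmem a x hxa with ⟨ha1, hxa'⟩ | ⟨ha1, ha2, hxa'⟩ | ⟨ha1, ha2, hxa'⟩ <;>
          rcases hmem b x hxb with ⟨hb1, hxb'⟩ | ⟨hb1, hb2, hxb'⟩ | ⟨hb1, hb2, hxb'⟩
        · exact hab (ha1.trans hb1.symm)
        · subst hxa'
          rcases hxb' with h | h
          · exact hs1A2 h
          · exact h.2 rfl
        · subst hxa'
          exact hAA b hbN hb1 hxb' (ha1 ▸ hj1)
        · subst hxb'
          rcases hxa' with h | h
          · exact hs1A2 h
          · exact h.2 rfl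
        · exact hab (ha2.trans hb2.symm)
        · rcases hxa' with h | h
          · exact hAA2 b hbN hb2 hxb' h
          · exact hAA b hbN hb1 hxb' h.1
        · subst hxb'
          exact hAA a haN ha1 hxa' (hb1 ▸ hj1)
        · rcases hxb' with h | h
          · exact hAA2 a haN ha2 hxa' h
          · exact hAA a haN ha1 hxa' h.1
        · exact Finset.disjoint_left.mp (hdisj a haN b hbN hab) hxa' hxb'
      · -- union
        apply subset_antisymm
        · intro x hx
          rw [Finset.mem_biUnion] at hx
          obtain ⟨j, hjN, hj⟩ := hx
          exact hA'sub j hjN hj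
        · intro x hx
          rw [← hunion] at hx
          rw [Finset.mem_biUnion] at hx ⊢
          obtain ⟨j, hjN, hj⟩ := hx
          by_cases h1 : j = j1
          · subst h1
            by_cases hx1 : x = s + 1
            · exact ⟨j, hjN, by simp [hA', hx1]⟩
            · refine ⟨j2, hj2N, ?_⟩
              simp [hA', if_neg hj21, Finset.mem_union, Finset.mem_sdiff, hj, hx1]
          · by_cases h2 : j = j2
            · subst h2
              exact ⟨j, hjN, by simp [hA', if_neg h1, hj]⟩
            · exact ⟨j, hjN, by simp [hA', if_neg h1, if_neg h2, hj]⟩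
      · -- values
        intro j hjN
        simp only [hA']
        split
        · rw [bval, Finset.sum_singleton]
          exact hgood
        · split
          · refine le_trans (hval j2 hj2N) ?_
            rw [bval, bval]
            apply Finset.sum_le_sum_of_subset_of_nonneg Finset.subset_union_left
            intro g hg _
            exact hgoods i hin g ((Finset.union_subset (hsubM j2 hj2N)
              (le_trans Finset.sdiff_subset (hsubM j1 hj1N))) hg)
          · exact hval j hjN
      · -- singletons
        intro g hg
        rw [Finset.mem_Icc] at hg
        by_cases hgs : g ≤ s
        · have hgmem : g ∈ Finset.Icc 1 s := Finset.mem_Icc.mpr ⟨hg.1, hgs⟩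
          have hjN := (hsing g hgmem).choose_spec.1
          have hjg := (hsing g hgmem).choose_spec.2
          have hjW : (hsing g hgmem).choose ∈ W := by
            rw [hW, Finset.mem_image]
            exact ⟨g, hgmem, by rw [dif_pos hgmem]⟩
          have hj1' : (hsing g hgmem).choose ≠ j1 := fun h => hj1W (h ▸ hjW)
          have hj2' : (hsing g hgmem).choose ≠ j2 := fun h => hj2W (h ▸ hjW)
          exact ⟨_, hjN, by simp [hA', if_neg hj1', if_neg hj2', hjg]⟩
        · have : g = s + 1 := by omega
          exact ⟨j1, hj1N, by simp [hA', this]⟩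
  obtain ⟨A, hA, hs⟩ := key t le_rfl
  exact ⟨A, hA, hs⟩
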